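/- Under the same hypotheses, with R as defined, the matrix R + kC equals -(1/(ση)) 𝒢 + (1 - 1/σ) k C where 𝒢 = S̄ - S̄(S̄ + (η/ζ)Q)⁻¹ S̄; consequently R + kC is positive definite when σ < 0 and negative definite when σ ∈ (0,1), so R + kC is invertible. -/

import Mathlib

open Matrix

lemma posDef_smul' {m : ℕ} {A : Matrix (Fin m) (Fin m) ℝ} (hA : A.PosDef) {c : ℝ}
    (hc : 0 < c) : (c • A).PosDef := by
  refine PosDef.of_dotProduct_mulVec_pos ?_ fun x hx => ?_
  · unfold Matrix.IsHermitian
    rw [conjTranspose_smul, hA.1.eq]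
    simp
  · rw [smul_mulVec, dotProduct_smul, smul_eq_mul]
    exact mul_pos hc (hA.dotProduct_mulVec_pos hx)

lemma posSemidef_smul' {m : ℕ} {A : Matrix (Fin m) (Fin m) ℝ} (hA : A.PosSemidef) {c : ℝ}
    (hc : 0 ≤ c) : (c • A).PosSemidef := by
  refine PosSemidef.of_dotProduct_mulVec_nonneg ?_ fun x => ?_
  · unfold Matrix.IsHermitian
    rw [conjTranspose_smul, hA.1.eq]
    simp
  · rw [smul_mulVec, dotProduct_smul, smul_eq_mul]
    exact mul_nonneg hc (hA.dotProduct_mulVec_nonneg x)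

theorem stmt4 {n m : ℕ} (K : Matrix (Fin n) (Fin n) ℝ) (G : Matrix (Fin m) (Fin n) ℝ)
    (Q C : Matrix (Fin m) (Fin m) ℝ) (η ζ k σ : ℝ)
    (hK : K.PosDef) (hG : ∀ p : Fin m → ℝ, Gᵀ *ᵥ p = 0 → p = 0)
    (hQ : Q.PosDef) (hC : C.PosSemidef)
    (hη : 0 < η) (hζ : 0 < ζ) (hk : 0 < k)
    (hσ : σ < 0 ∨ (0 < σ ∧ σ < 1))
    (S R 𝒢 : Matrix (Fin m) (Fin m) ℝ)
    (hS : S = G * K⁻¹ * Gᵀ)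
    (hR : R = -(1 / (σ * η)) • S
        + (1 / (σ * η ^ 2)) • (S * ((1 / η) • S + (1 / ζ) • Q)⁻¹ * S)
        - (k / σ) • C)
    (h𝒢 : 𝒢 = S - S * (S + (η / ζ) • Q)⁻¹ * S) :
    R + k • C = -(1 / (σ * η)) • 𝒢 + ((1 - 1 / σ) * k) • C ∧
    (σ < 0 → (R + k • C).PosDef) ∧
    ((0 < σ ∧ σ < 1) → (-(R + k • C)).PosDef) ∧
    IsUnit (R + k • C).det := by
  have hσ0 : σ ≠ 0 := by rcases hσ with h | ⟨h, _⟩ <;> [exact h.ne; exact h.ne']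
  -- S is positive definite
  have hSpd : S.PosDef := by
    refine PosDef.of_dotProduct_mulVec_pos ?_ fun x hx => ?_
    · rw [hS]
      have := isHermitian_mul_mul_conjTranspose G hK.inv.1
      simpa using this
    · have hGx : Gᵀ *ᵥ x ≠ 0 := fun h => hx (hG x h)
      have hpos := hK.inv.dotProduct_mulVec_pos hGx
      rw [hS]
      have hmv : (G * K⁻¹ * Gᵀ) *ᵥ x = G *ᵥ (K⁻¹ *ᵥ (Gᵀ *ᵥ x)) := by
        rw [← mulVec_mulVec, ← mulVec_mulVec]
      rw [hmv, dotProduct_mulVec, ← mulVec_transpose]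
      simpa [star_trivial] using hpos
  set M : Matrix (Fin m) (Fin m) ℝ := (η / ζ) • Q with hM
  have hMpd : M.PosDef := posDef_smul' hQ (div_pos hη hζ)
  set N : Matrix (Fin m) (Fin m) ℝ := S + M with hN
  have hNpd : N.PosDef := hSpd.add hMpd
  set A : Matrix (Fin m) (Fin m) ℝ := N⁻¹ with hA
  have hNA : N * A = 1 := mul_nonsing_inv N hNpd.det_pos.ne'.isUnit
  have hAN : A * N = 1 := nonsing_inv_mul N hNpd.det_pos.ne'.isUnit
  have hSinv : S⁻¹ * S = 1 := nonsing_inv_mul S hSpd.det_pos.ne'.isUnit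
  have hMinv : M⁻¹ * M = 1 := nonsing_inv_mul M hMpd.det_pos.ne'.isUnit
  -- rewrite the inner inverse
  have hscale : (1 / η) • S + (1 / ζ) • Q = (1 / η) • N := by
    rw [hN, hM, smul_add, smul_smul]
    congr 2
    field_simp
  have hinv2 : ((1 / η) • S + (1 / ζ) • Q)⁻¹ = η • A := by
    rw [hscale]
    refine inv_eq_right_inv ?_
    rw [smul_mul_assoc, mul_smul_comm, hNA, smul_smul]
    rw [one_div, inv_mul_cancel₀ hη.ne']
    simp
  -- key identity
  have hSA : S * A + M * A = 1 := by rw [← add_mul, ← hN, hNA]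
  have hAS : A * S + A * M = 1 := by rw [← mul_add, ← hN, hAN]
  have e1 : S * A = 1 - M * A := eq_sub_of_add_eq hSA
  have e2 : A * S = 1 - A * M := eq_sub_of_add_eq hAS
  have e3 : S * A * S = S - M + M * A * M := by
    calc S * A * S = (1 - M * A) * S := by rw [e1]
      _ = S - M * (A * S) := by noncomm_ring
      _ = S - M * (1 - A * M) := by rw [e2]
      _ = S - M + M * A * M := by noncomm_ring
  have e4 : S - S * A * S = M - M * A * M := by rw [e3]; noncomm_ring
  have hGinv : (S⁻¹ + M⁻¹) * 𝒢 = 1 := by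
    rw [h𝒢]
    calc (S⁻¹ + M⁻¹) * (S - S * A * S)
        = (S⁻¹ * S) - (S⁻¹ * S) * (A * S) + M⁻¹ * (S - S * A * S) := by noncomm_ring
      _ = (S⁻¹ * S) - (S⁻¹ * S) * (A * S) + M⁻¹ * (M - M * A * M) := by rw [e4]
      _ = (S⁻¹ * S) - (S⁻¹ * S) * (A * S) + ((M⁻¹ * M) - (M⁻¹ * M) * (A * M)) := by
          noncomm_ring
      _ = 1 - 1 * (A * S) + (1 - 1 * (A * M)) := by rw [hSinv, hMinv]
      _ = 1 + (1 - (A * S + A * M)) := by noncomm_ring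
      _ = 1 := by rw [hAS]; noncomm_ring
  have h𝒢pd : 𝒢.PosDef := by
    have hsum : (S⁻¹ + M⁻¹).PosDef := hSpd.inv.add hMpd.inv
    have : 𝒢 = (S⁻¹ + M⁻¹)⁻¹ := (inv_eq_right_inv hGinv).symm
    rw [this]
    exact hsum.inv
  -- main algebraic identity
  have hmain : R + k • C = -(1 / (σ * η)) • 𝒢 + ((1 - 1 / σ) * k) • C := by
    rw [hR, hinv2, h𝒢, mul_smul_comm, smul_mul_assoc]
    match_scalars <;> field_simp <;> ring
  have hPD : σ < 0 → (R + k • C).PosDef := by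
    intro hσneg
    rw [hmain]
    have h1 : (0:ℝ) < -(1 / (σ * η)) := by
      rw [neg_pos]
      exact div_neg_of_pos_of_neg one_pos (mul_neg_of_neg_of_pos hσneg hη)
    have h2 : (0:ℝ) ≤ (1 - 1 / σ) * k := by
      have : (1:ℝ) - 1 / σ ≥ 1 := by
        have : 1 / σ ≤ 0 := div_nonpos_of_nonneg_of_nonpos zero_le_one hσneg.le
        linarith
      nlinarith
    exact (posDef_smul' h𝒢pd h1).add_posSemidef (posSemidef_smul' hC h2)
  have hND : (0 < σ ∧ σ < 1) → (-(R + k • C)).PosDef := by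
    rintro ⟨h0, h1⟩
    have heq : -(R + k • C) = (1 / (σ * η)) • 𝒢 + ((1 / σ - 1) * k) • C := by
      rw [hmain]
      match_scalars <;> ring
    rw [heq]
    have hc1 : (0:ℝ) < 1 / (σ * η) := div_pos one_pos (mul_pos h0 hη)
    have hc2 : (0:ℝ) ≤ (1 / σ - 1) * k := by
      have : (1:ℝ) < 1 / σ := by
        rw [lt_div_iff₀ h0]; linarith
      nlinarith
    exact (posDef_smul' h𝒢pd hc1).add_posSemidef (posSemidef_smul' hC hc2)
  refine ⟨hmain, hPD, hND, ?_⟩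
  rw [isUnit_iff_ne_zero]
  rcases hσ with h | h
  · exact (hPD h).det_pos.ne'
  · intro h0
    have := (hND h).det_pos
    rw [Matrix.det_neg, h0, mul_zero] at this
    exact lt_irrefl _ this
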